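/- Upper landscape inequality: Let C be a real symmetric N×N matrix with positive diagonal, nonpositive off-diagonal entries, and strict diagonal dominance. Set μ = 2·max_i C_ii, let (μI - C)‡ be the comparison matrix of μI - C, and define û by (μI - C)‡ û = 𝟙. Then for any eigenpair (λ, v) with Cv = λv, λ > 0, v ≠ 0, one has |v_i| / ‖v‖_∞ ≤ (μ - λ) û_i for each i. -/

import Mathlib

open Matrix Finset

/-- The comparison matrix `A‡`: diagonal entries `|A i i|`, off-diagonal entries `-|A i j|`. -/
def compMat {N : ℕ} (A : Matrix (Fin N) (Fin N) ℝ) : Matrix (Fin N) (Fin N) ℝ :=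
  fun i j => if i = j then |A i i| else -|A i j|

/-- A strictly diagonally dominant Z-matrix is monotone. -/
lemma zmat_mono {N : ℕ} [NeZero N] (B : Matrix (Fin N) (Fin N) ℝ)
    (hoff : ∀ i j, i ≠ j → B i j ≤ 0)
    (hdom : ∀ i, ∑ j ∈ Finset.univ.erase i, |B i j| < B i i)
    (w : Fin N → ℝ) (h : ∀ i, 0 ≤ (B *ᵥ w) i) : ∀ i, 0 ≤ w i := by
  obtain ⟨i, -, hi⟩ := Finset.exists_min_image Finset.univ w Finset.univ_nonempty
  intro k
  have hk : w i ≤ w k := hi k (Finset.mem_univ k)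
  by_contra hneg
  push_neg at hneg
  have hwi : w i < 0 := lt_of_le_of_lt hk hneg
  have hBw : (B *ᵥ w) i = B i i * w i + ∑ j ∈ Finset.univ.erase i, B i j * w j := by
    rw [mulVec, dotProduct, ← Finset.add_sum_erase Finset.univ _ (Finset.mem_univ i)]
  have hsum : ∑ j ∈ Finset.univ.erase i, B i j * w j ≤
      ∑ j ∈ Finset.univ.erase i, B i j * w i := by
    apply Finset.sum_le_sum
    intro j hj
    have hji : j ≠ i := (Finset.mem_erase.mp hj).1
    exact mul_le_mul_of_nonpos_left (hi j (Finset.mem_univ j)) (hoff i j (Ne.symm hji))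
  have habs : ∑ j ∈ Finset.univ.erase i, B i j * w i
      = -(∑ j ∈ Finset.univ.erase i, |B i j|) * w i := by
    rw [← Finset.sum_mul]
    congr 1
    rw [← Finset.sum_neg_distrib]
    apply Finset.sum_congr rfl
    intro j hj
    have hji : j ≠ i := (Finset.mem_erase.mp hj).1
    rw [abs_of_nonpos (hoff i j (Ne.symm hji)), neg_neg]
  have : (B *ᵥ w) i ≤ (B i i - ∑ j ∈ Finset.univ.erase i, |B i j|) * w i := by
    rw [hBw, sub_mul]
    nlinarith [hsum, habs]
  have hpos : 0 < B i i - ∑ j ∈ Finset.univ.erase i, |B i j| := sub_pos.mpr (hdom i)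
  nlinarith [h i, mul_neg_of_pos_of_neg hpos hwi]

theorem stmt_8 {N : ℕ} [NeZero N] (C : Matrix (Fin N) (Fin N) ℝ)
    (hsym : C.IsSymm) (hdiag : ∀ i, 0 < C i i)
    (hoff : ∀ i j, i ≠ j → C i j ≤ 0)
    (hdom : ∀ i, ∑ j ∈ Finset.univ.erase i, |C i j| < C i i)
    (μ : ℝ) (hμ : μ = 2 * Finset.univ.sup' Finset.univ_nonempty (fun i => C i i))
    (uhat : Fin N → ℝ)
    (huhat : compMat (μ • (1 : Matrix (Fin N) (Fin N) ℝ) - C) *ᵥ uhat = 1)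
    (lam : ℝ) (hlam : 0 < lam) (v : Fin N → ℝ) (hv : v ≠ 0)
    (heig : C *ᵥ v = lam • v) (i : Fin N) :
    |v i| / ‖v‖ ≤ (μ - lam) * uhat i := by
  -- μ dominates twice each diagonal entry
  have hμC : ∀ k, 2 * C k k ≤ μ := by
    intro k
    rw [hμ]
    have := Finset.le_sup' (fun i => C i i) (Finset.mem_univ k)
    linarith
  set B := compMat (μ • (1 : Matrix (Fin N) (Fin N) ℝ) - C) with hB
  have hBentry : ∀ k j, B k j = if k = j then μ - C k k else C k j := by
    intro k j
    by_cases hkj : k = j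
    · subst hkj
      simp only [hB, compMat, if_pos rfl, Matrix.sub_apply, Matrix.smul_apply,
        Matrix.one_apply_eq, smul_eq_mul, mul_one, if_true, eq_self_iff_true]
      exact abs_of_nonneg (by have := hμC k; have := hdiag k; linarith)
    · simp only [hB, compMat, if_neg hkj, Matrix.sub_apply, Matrix.smul_apply,
        Matrix.one_apply_ne hkj, smul_eq_mul, mul_zero, zero_sub, abs_neg]
      rw [abs_of_nonpos (hoff k j hkj), neg_neg]
  have hBoff : ∀ k j, k ≠ j → B k j ≤ 0 := by
    intro k j hkj
    rw [hBentry k j, if_neg hkj]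
    exact hoff k j hkj
  have hBdom : ∀ k, ∑ j ∈ Finset.univ.erase k, |B k j| < B k k := by
    intro k
    rw [hBentry k k, if_pos rfl]
    have hsum : ∑ j ∈ Finset.univ.erase k, |B k j| = ∑ j ∈ Finset.univ.erase k, |C k j| := by
      apply Finset.sum_congr rfl
      intro j hj
      rw [hBentry k j, if_neg (fun h => (Finset.mem_erase.mp hj).1 h.symm)]
    rw [hsum]
    have := hdom k; have := hμC k; linarith
  -- norm facts
  have hvnorm : 0 < ‖v‖ := norm_pos_iff.mpr hv
  have hvle : ∀ j, |v j| ≤ ‖v‖ := by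
    intro j
    have := norm_le_pi_norm v j
    rwa [Real.norm_eq_abs] at this
  -- Gershgorin: lam < μ
  have hlamμ : lam < μ := by
    obtain ⟨i0, -, hi0⟩ := Finset.exists_max_image Finset.univ (fun j => |v j|) Finset.univ_nonempty
    have hvi0 : 0 < |v i0| := by
      by_contra h
      push_neg at h
      apply hv
      funext j
      have := hi0 j (Finset.mem_univ j)
      have : |v j| ≤ 0 := le_trans this h
      have := abs_nonneg (v j)
      simp only [Pi.zero_apply]
      linarith [abs_eq_zero.mp (le_antisymm ‹|v j| ≤ 0› (abs_nonneg (v j)))]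
    have heq : lam * v i0 = ∑ j, C i0 j * v j := by
      have := congrFun heig i0
      simp only [mulVec, dotProduct, Pi.smul_apply, smul_eq_mul] at this
      linarith
    have hsplit : (lam - C i0 i0) * v i0 = ∑ j ∈ Finset.univ.erase i0, C i0 j * v j := by
      rw [← Finset.add_sum_erase Finset.univ (fun j => C i0 j * v j) (Finset.mem_univ i0)] at heq
      ring_nf
      ring_nf at heq
      linarith
    have habs : |lam - C i0 i0| * |v i0| ≤ (∑ j ∈ Finset.univ.erase i0, |C i0 j|) * |v i0| := by
      rw [← abs_mul, hsplit, Finset.sum_mul]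
      calc |∑ j ∈ Finset.univ.erase i0, C i0 j * v j|
          ≤ ∑ j ∈ Finset.univ.erase i0, |C i0 j * v j| := Finset.abs_sum_le_sum_abs _ _
        _ ≤ ∑ j ∈ Finset.univ.erase i0, |C i0 j| * |v i0| := by
            apply Finset.sum_le_sum
            intro j hj
            rw [abs_mul]
            exact mul_le_mul_of_nonneg_left (hi0 j (Finset.mem_univ j)) (abs_nonneg _)
    have h1 : |lam - C i0 i0| < C i0 i0 := by
      have h2 : (∑ j ∈ Finset.univ.erase i0, |C i0 j|) * |v i0| < C i0 i0 * |v i0| :=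
        mul_lt_mul_of_pos_right (hdom i0) hvi0
      nlinarith [habs]
    have h3 := abs_lt.mp h1
    have h4 := hμC i0
    linarith [h3.2]
  -- key: B *ᵥ |v| ≤ (μ - lam) * ‖v‖ at each coordinate
  have hkey : ∀ k, (B *ᵥ fun j => |v j|) k ≤ (μ - lam) * ‖v‖ := by
    intro k
    have heqk : μ * v k - lam * v k = (μ - C k k) * v k - ∑ j ∈ Finset.univ.erase k, C k j * v j := by
      have := congrFun heig k
      simp only [mulVec, dotProduct, Pi.smul_apply, smul_eq_mul] at this
      rw [← Finset.add_sum_erase Finset.univ (fun j => C k j * v j) (Finset.mem_univ k)] at this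
      ring_nf
      ring_nf at this
      linarith
    have hBv : (B *ᵥ fun j => |v j|) k
        = (μ - C k k) * |v k| - ∑ j ∈ Finset.univ.erase k, |C k j| * |v j| := by
      rw [mulVec, dotProduct, ← Finset.add_sum_erase Finset.univ _ (Finset.mem_univ k)]
      rw [hBentry k k, if_pos rfl]
      rw [sub_eq_add_neg]
      congr 1
      rw [← Finset.sum_neg_distrib]
      apply Finset.sum_congr rfl
      intro j hj
      have hkj : k ≠ j := (Ne.symm (Finset.mem_erase.mp hj).1)
      rw [hBentry k j, if_neg hkj, abs_of_nonpos (hoff k j hkj)]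
      ring
    have hstep : (B *ᵥ fun j => |v j|) k ≤ (μ - lam) * |v k| := by
      rw [hBv]
      have h1 : (μ - C k k) * |v k| - |∑ j ∈ Finset.univ.erase k, C k j * v j|
          ≤ |(μ - C k k) * v k - ∑ j ∈ Finset.univ.erase k, C k j * v j| := by
        calc (μ - C k k) * |v k| - |∑ j ∈ Finset.univ.erase k, C k j * v j|
            = |(μ - C k k) * v k| - |∑ j ∈ Finset.univ.erase k, C k j * v j| := by
              rw [abs_mul, abs_of_nonneg (show (0:ℝ) ≤ μ - C k k by
                have := hμC k; have := hdiag k; linarith)]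
          _ ≤ _ := abs_sub_abs_le_abs_sub _ _
      have h2 : |∑ j ∈ Finset.univ.erase k, C k j * v j|
          ≤ ∑ j ∈ Finset.univ.erase k, |C k j| * |v j| := by
        calc |∑ j ∈ Finset.univ.erase k, C k j * v j|
            ≤ ∑ j ∈ Finset.univ.erase k, |C k j * v j| := Finset.abs_sum_le_sum_abs _ _
          _ = ∑ j ∈ Finset.univ.erase k, |C k j| * |v j| := by
              apply Finset.sum_congr rfl; intro j _; rw [abs_mul]
      have h3 : |(μ - C k k) * v k - ∑ j ∈ Finset.univ.erase k, C k j * v j|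
          = (μ - lam) * |v k| := by
        rw [← heqk]
        rw [show μ * v k - lam * v k = (μ - lam) * v k by ring, abs_mul,
          abs_of_nonneg (by linarith : (0:ℝ) ≤ μ - lam)]
      linarith
    have := mul_le_mul_of_nonneg_left (hvle k) (by linarith : (0:ℝ) ≤ μ - lam)
    linarith
  -- apply monotonicity
  set w : Fin N → ℝ := fun j => (μ - lam) * ‖v‖ * uhat j - |v j| with hw
  have hBw : ∀ k, 0 ≤ (B *ᵥ w) k := by
    intro k
    have : (B *ᵥ w) k = (μ - lam) * ‖v‖ * (B *ᵥ uhat) k - (B *ᵥ fun j => |v j|) k := by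
      simp only [hw, mulVec, dotProduct]
      rw [Finset.mul_sum, ← Finset.sum_sub_distrib]
      apply Finset.sum_congr rfl
      intro j _
      ring
    rw [this, huhat]
    simp only [Pi.one_apply, mul_one]
    linarith [hkey k]
  have hmono := zmat_mono B hBoff hBdom w hBw i
  rw [hw] at hmono
  simp only at hmono
  rw [div_le_iff₀ hvnorm]
  nlinarith [hmono]
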